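/- Fix k ∈ ℕ and suppose x_k, v_k ∈ X. Let (λ_{k+1}, x_{k+1}, v_{k+1}) be one step of the semi-implicit scheme with α_k > 0: θ_k(λ_{k+1} − λ_k)/α_k = A v_{k+1} − b; (x_{k+1} − x_k)/α_k = v_k − x_{k+1}; γ_k(v_{k+1} − v_k)/α_k = μ_β(x_{k+1} − v_{k+1}) − (ξ_{k+1} + Aᵀλ_{k+1}) with ξ_{k+1} ∈ ∂f_β(x_{k+1}) + N_X(x_{k+1}), and parameter updates θ_{k+1} = θ_k/(1+α_k), γ_{k+1} = (γ_k + μ_β α_k)/(1+α_k). With E_k = L_β(x_k, λ*) − L_β(x*, λ_k) + (γ_k/2)‖v_k − x*‖² + (θ_k/2)‖λ_k − λ*‖², we have x_{k+1} ∈ X and E_{k+1} − E_k ≤ −α_k E_{k+1} − α_k⟨ξ_{k+1} + Aᵀλ*, v_{k+1} − v_k⟩ − (γ_k/2)‖v_{k+1} − v_k‖² − (θ_k/2)‖λ_{k+1} − λ_k‖². -/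

import Mathlib

open scoped RealInnerProductSpace Pointwise

/-- The smallest singular value of a linear map between Euclidean spaces. -/
noncomputable def sigmaMin {n m : ℕ}
    (A : EuclideanSpace ℝ (Fin n) →L[ℝ] EuclideanSpace ℝ (Fin m)) : ℝ :=
  sInf {c : ℝ | ∃ x : EuclideanSpace ℝ (Fin n), ‖x‖ = 1 ∧ ‖A x‖ = c}

/-- The convex subdifferential. -/
def subdiff {n : ℕ} (f : EuclideanSpace ℝ (Fin n) → ℝ)
    (x : EuclideanSpace ℝ (Fin n)) : Set (EuclideanSpace ℝ (Fin n)) :=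
  {p | ∀ y, f x + ⟪p, y - x⟫ ≤ f y}

/-- The normal cone of `X` at `x` (empty if `x ∉ X`). -/
def normalCone {n : ℕ} (X : Set (EuclideanSpace ℝ (Fin n)))
    (x : EuclideanSpace ℝ (Fin n)) : Set (EuclideanSpace ℝ (Fin n)) :=
  {p | x ∈ X ∧ ∀ z ∈ X, ⟪p, z - x⟫ ≤ 0}

lemma sigmaMin_nonneg {n m : ℕ}
    (A : EuclideanSpace ℝ (Fin n) →L[ℝ] EuclideanSpace ℝ (Fin m)) :
    0 ≤ sigmaMin A := by
  apply Real.sInf_nonneg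
  rintro c ⟨x, -, rfl⟩
  exact norm_nonneg _

lemma sigmaMin_mul_le {n m : ℕ}
    (A : EuclideanSpace ℝ (Fin n) →L[ℝ] EuclideanSpace ℝ (Fin m))
    (u : EuclideanSpace ℝ (Fin n)) :
    sigmaMin A * ‖u‖ ≤ ‖A u‖ := by
  rcases eq_or_ne u 0 with rfl | hu
  · simp
  · have hn : (0:ℝ) < ‖u‖ := norm_pos_iff.mpr hu
    have hbdd : BddBelow {c : ℝ | ∃ x : EuclideanSpace ℝ (Fin n), ‖x‖ = 1 ∧ ‖A x‖ = c} := by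
      refine ⟨0, ?_⟩
      rintro c ⟨x, -, rfl⟩
      exact norm_nonneg _
    have hmem : ‖A (‖u‖⁻¹ • u)‖ ∈
        {c : ℝ | ∃ x : EuclideanSpace ℝ (Fin n), ‖x‖ = 1 ∧ ‖A x‖ = c} := by
      refine ⟨‖u‖⁻¹ • u, ?_, rfl⟩
      rw [norm_smul, norm_inv, norm_norm, inv_mul_cancel₀ hn.ne']
    have h1 : sigmaMin A ≤ ‖A (‖u‖⁻¹ • u)‖ := csInf_le hbdd hmem
    have h2 : ‖A (‖u‖⁻¹ • u)‖ = ‖u‖⁻¹ * ‖A u‖ := by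
      rw [map_smul, norm_smul, norm_inv, norm_norm]
    rw [h2] at h1
    have h3 := mul_le_mul_of_nonneg_right h1 hn.le
    calc sigmaMin A * ‖u‖ ≤ ‖u‖⁻¹ * ‖A u‖ * ‖u‖ := h3
      _ = ‖A u‖ := by field_simp

lemma sigmaMin_sq_mul_le {n m : ℕ}
    (A : EuclideanSpace ℝ (Fin n) →L[ℝ] EuclideanSpace ℝ (Fin m))
    (u : EuclideanSpace ℝ (Fin n)) :
    sigmaMin A ^ 2 * ‖u‖ ^ 2 ≤ ‖A u‖ ^ 2 := by
  have h := sigmaMin_mul_le A u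
  nlinarith [mul_nonneg (sigmaMin_nonneg A) (norm_nonneg u), norm_nonneg (A u)]

/-- `‖a - c‖² = ‖b - c‖² + 2⟪a - b, a - c⟫ - ‖a - b‖²`. -/
lemma norm_diff_expand {E : Type*} [NormedAddCommGroup E] [InnerProductSpace ℝ E]
    (a b c : E) : ‖a - c‖^2 = ‖b - c‖^2 + 2*⟪a - b, a - c⟫ - ‖a - b‖^2 := by
  have h := norm_sub_sq_real (a - c) (a - b)
  rw [show a - c - (a - b) = b - c by abel] at h
  have hc := real_inner_comm (a - c) (a - b)
  linarith

/-- `‖a - c‖² = ‖a - b‖² + 2⟪a - b, b - c⟫ + ‖b - c‖²`. -/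
lemma norm_split {E : Type*} [NormedAddCommGroup E] [InnerProductSpace ℝ E]
    (a b c : E) : ‖a - c‖^2 = ‖a - b‖^2 + 2*⟪a - b, b - c⟫ + ‖b - c‖^2 := by
  have h : a - c = (a - b) + (b - c) := by abel
  rw [h, norm_add_sq_real]

set_option maxHeartbeats 2000000 in
/-- Lemma 5.1: one-iteration analysis of the (uncorrected) semi-implicit scheme (5.1). -/
theorem one_iteration_semi_implicit {n m : ℕ}
    (X : Set (EuclideanSpace ℝ (Fin n)))
    (hXne : X.Nonempty) (hXcl : IsClosed X) (hXcv : Convex ℝ X)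
    (f : EuclideanSpace ℝ (Fin n) → ℝ)
    (hfcv : ConvexOn ℝ Set.univ f)
    (A : EuclideanSpace ℝ (Fin n) →L[ℝ] EuclideanSpace ℝ (Fin m))
    (b : EuclideanSpace ℝ (Fin m))
    (μ β μβ : ℝ) (hμ : 0 ≤ μ) (hβ : 0 ≤ β)
    (hμβ : μβ = μ + β * sigmaMin A ^ 2)
    (hsc : ∀ x ∈ X, ∀ y ∈ X, ∀ p ∈ subdiff f x,
      f x + ⟪p, y - x⟫ + μ / 2 * ‖y - x‖ ^ 2 ≤ f y)
    (fβ : EuclideanSpace ℝ (Fin n) → ℝ)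
    (hfβ : ∀ z, fβ z = f z + β / 2 * ‖A z - b‖ ^ 2)
    (Lβ : EuclideanSpace ℝ (Fin n) → EuclideanSpace ℝ (Fin m) → ℝ)
    (hLβ : ∀ z w, Lβ z w = fβ z + ⟪w, A z - b⟫)
    (xs : EuclideanSpace ℝ (Fin n)) (ls : EuclideanSpace ℝ (Fin m))
    (hxs : xs ∈ X) (hKKT1 : A xs = b)
    (hKKT2 : ∃ p ∈ subdiff f xs, ∃ q ∈ normalCone X xs,
      p + q + (ContinuousLinearMap.adjoint A) ls = 0)
    (θk θk1 γk γk1 αk : ℝ)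
    (hθk : 0 < θk) (hγk : 0 < γk) (hαk : 0 < αk)
    (hθ1 : θk1 = θk / (1 + αk)) (hγ1 : γk1 = (γk + μβ * αk) / (1 + αk))
    (lamk lamk1 : EuclideanSpace ℝ (Fin m))
    (xk xk1 vk vk1 ξ : EuclideanSpace ℝ (Fin n))
    (hxk : xk ∈ X) (hvk : vk ∈ X)
    (hdual : (θk / αk) • (lamk1 - lamk) = A vk1 - b)
    (hprim : (αk)⁻¹ • (xk1 - xk) = vk - xk1)
    (hξ : ξ ∈ subdiff fβ xk1 + normalCone X xk1)
    (hvup : (γk / αk) • (vk1 - vk) =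
      μβ • (xk1 - vk1) - (ξ + (ContinuousLinearMap.adjoint A) lamk1))
    (Ek Ek1 : ℝ)
    (hEk : Ek = Lβ xk ls - Lβ xs lamk
      + γk / 2 * ‖vk - xs‖ ^ 2 + θk / 2 * ‖lamk - ls‖ ^ 2)
    (hEk1 : Ek1 = Lβ xk1 ls - Lβ xs lamk1
      + γk1 / 2 * ‖vk1 - xs‖ ^ 2 + θk1 / 2 * ‖lamk1 - ls‖ ^ 2) :
    xk1 ∈ X ∧
      Ek1 - Ek ≤ -(αk * Ek1)
        - αk * ⟪ξ + (ContinuousLinearMap.adjoint A) ls, vk1 - vk⟫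
        - γk / 2 * ‖vk1 - vk‖ ^ 2 - θk / 2 * ‖lamk1 - lamk‖ ^ 2 := by
  obtain ⟨p, hp, q, hq, hpq⟩ := Set.mem_add.mp hξ
  have hx1mem : xk1 ∈ X := hq.1
  have hμβ0 : 0 ≤ μβ := by
    rw [hμβ]
    have := mul_nonneg hβ (sq_nonneg (sigmaMin A))
    linarith
  have h1p : (0:ℝ) < 1 + αk := by linarith
  -- primal step in multiplied form
  have hprim' : xk1 - xk = αk • (vk - xk1) := by
    have h := congrArg (fun z => αk • z) hprim
    simp only [smul_smul, mul_inv_cancel₀ hαk.ne', one_smul] at h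
    exact h.symm ▸ h
  -- strong convexity of fβ on X
  have hfβsc : ∀ x ∈ X, ∀ y ∈ X, ∀ pp ∈ subdiff fβ x,
      fβ x + ⟪pp, y - x⟫ + μβ / 2 * ‖y - x‖ ^ 2 ≤ fβ y := by
    intro x hx y hy pp hpp
    set g' : EuclideanSpace ℝ (Fin n) := β • (ContinuousLinearMap.adjoint A) (A x - b) with hg'
    have gid : ∀ w, β/2 * ‖A w - b‖^2
        = β/2 * ‖A x - b‖^2 + ⟪g', w - x⟫ + β/2 * ‖A (w - x)‖^2 := by
      intro w
      have hrw : A w - b = (A x - b) + A (w - x) := by rw [map_sub]; abel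
      rw [hrw, norm_add_sq_real]
      have hgi : ⟪g', w - x⟫ = β * ⟪A x - b, A (w - x)⟫ := by
        rw [hg', real_inner_smul_left, ContinuousLinearMap.adjoint_inner_left]
      rw [hgi]; ring
    -- the sum rule direction we need: pp - g' ∈ subdiff f x
    have hps : pp - g' ∈ subdiff f x := by
      intro y'
      set C : ℝ := β/2 * ‖A (y' - x)‖^2 with hC
      have hCnn : 0 ≤ C := by
        rw [hC]; exact mul_nonneg (by linarith) (sq_nonneg _)
      have key : ∀ t : ℝ, 0 < t → t ≤ 1 → f x + ⟪pp - g', y' - x⟫ ≤ f y' + t * C := by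
        intro t ht ht1
        have hz := hpp (x + t • (y' - x))
        have h3 : (x + t • (y' - x)) - x = t • (y' - x) := by abel
        rw [h3, real_inner_smul_right] at hz
        have hg := gid (x + t • (y' - x))
        have hgz : fβ (x + t • (y' - x))
            = f (x + t • (y' - x)) + β/2 * ‖A x - b‖^2 + t * ⟪g', y' - x⟫ + t^2 * C := by
          rw [hfβ, hg, h3, real_inner_smul_right, map_smul, norm_smul]
        
          simp only [Real.norm_eq_abs, mul_pow, sq_abs]
          rw [hC]; ring
        have hpt : (1 - t) • x + t • y' = x + t • (y' - x) := by
          rw [sub_smul, one_smul, smul_sub]; abel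
        have hcv := hfcv.2 (Set.mem_univ x) (Set.mem_univ y')
          (by linarith : (0:ℝ) ≤ 1 - t) ht.le (by ring)
        rw [hpt] at hcv
        rw [smul_eq_mul, smul_eq_mul] at hcv
        have hfx : fβ x = f x + β/2 * ‖A x - b‖^2 := hfβ x
        have hsub : ⟪pp - g', y' - x⟫ = ⟪pp, y' - x⟫ - ⟪g', y' - x⟫ := inner_sub_left _ _ _
        have hmul : t * (f x + ⟪pp - g', y' - x⟫) ≤ t * (f y' + t * C) := by
          rw [hsub]
          nlinarith [hz, hgz, hcv, hfx]
        exact le_of_mul_le_mul_left hmul ht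
      apply le_of_forall_pos_le_add
      intro ε hε
      have htpos : 0 < min 1 (ε / (C + 1)) := lt_min one_pos (div_pos hε (by linarith))
      have h := key (min 1 (ε / (C + 1))) htpos (min_le_left _ _)
      have hle : min 1 (ε / (C + 1)) * C ≤ ε := by
        have h1 : min 1 (ε / (C + 1)) * C ≤ (ε / (C + 1)) * C :=
          mul_le_mul_of_nonneg_right (min_le_right _ _) hCnn
        have h2 : (ε / (C + 1)) * C ≤ ε := by
          rw [div_mul_eq_mul_div, div_le_iff₀ (by linarith : (0:ℝ) < C + 1)]
          nlinarith
        linarith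
      linarith
    have h1 := hsc x hx y hy (pp - g') hps
    have h2 := gid y
    have h3 : β * sigmaMin A ^ 2 / 2 * ‖y - x‖^2 ≤ β/2 * ‖A (y - x)‖^2 := by
      have h := mul_le_mul_of_nonneg_left (sigmaMin_sq_mul_le A (y - x))
        (by linarith : (0:ℝ) ≤ β/2)
      nlinarith [h]
    have hsub : ⟪pp - g', y - x⟫ = ⟪pp, y - x⟫ - ⟪g', y - x⟫ := inner_sub_left _ _ _
    rw [hfβ x, hfβ y, hμβ]
    rw [hsub] at h1
    linarith
  -- vanishing duality-gap inner products at the KKT point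
  have zs0 : ⟪lamk, A xs - b⟫ = 0 := by rw [hKKT1, sub_self, inner_zero_right]
  have zs1 : ⟪lamk1, A xs - b⟫ = 0 := by rw [hKKT1, sub_self, inner_zero_right]
  -- F1 : dual update
  have hd2 : θk • (lamk1 - lamk) = αk • (A vk1 - b) := by
    have h := congrArg (fun z => αk • z) hdual
    simp only [smul_smul] at h
    rwa [show αk * (θk / αk) = θk by field_simp] at h
  have hinner1 : θk * ⟪lamk1 - lamk, lamk1 - ls⟫ = αk * ⟪A vk1 - b, lamk1 - ls⟫ := by
    have h := congrArg (fun z => ⟪z, lamk1 - ls⟫) hd2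
    rwa [real_inner_smul_left, real_inner_smul_left] at h
  have F1 : θk/2 * ‖lamk1 - ls‖^2
      = θk/2 * ‖lamk - ls‖^2 + αk * ⟪A vk1 - b, lamk1 - ls⟫
        - θk/2 * ‖lamk1 - lamk‖^2 := by
    linear_combination (θk/2) * norm_diff_expand lamk1 lamk ls + hinner1
  -- F2 : velocity update
  have hv2 : γk • (vk1 - vk)
      = αk • (μβ • (xk1 - vk1) - (ξ + (ContinuousLinearMap.adjoint A) lamk1)) := by
    have h := congrArg (fun z => αk • z) hvup
    simp only [smul_smul] at h
    rwa [show αk * (γk / αk) = γk by field_simp] at h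
  have hinner2 : γk * ⟪vk1 - vk, vk1 - xs⟫
      = αk * (μβ * ⟪xk1 - vk1, vk1 - xs⟫
        - ⟪ξ + (ContinuousLinearMap.adjoint A) lamk1, vk1 - xs⟫) := by
    have h := congrArg (fun z => ⟪z, vk1 - xs⟫) hv2
    rwa [real_inner_smul_left, real_inner_smul_left,
      inner_sub_left (𝕜 := ℝ) (μβ • (xk1 - vk1)) (ξ + (ContinuousLinearMap.adjoint A) lamk1) (vk1 - xs),
      real_inner_smul_left] at h
  have F2 : γk/2 * ‖vk1 - xs‖^2
      = γk/2 * ‖vk - xs‖^2 + αk * μβ * ⟪xk1 - vk1, vk1 - xs⟫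
        - αk * ⟪ξ + (ContinuousLinearMap.adjoint A) lamk1, vk1 - xs⟫
        - γk/2 * ‖vk1 - vk‖^2 := by
    linear_combination (γk/2) * norm_diff_expand vk1 vk xs + hinner2
  -- F3 : completing the square in the μβ terms
  have F3 : μβ * αk / 2 * ‖vk1 - xs‖^2 + αk * μβ * ⟪xk1 - vk1, vk1 - xs⟫
      = μβ * αk / 2 * ‖xk1 - xs‖^2 - μβ * αk / 2 * ‖xk1 - vk1‖^2 := by
    linear_combination (-(μβ * αk / 2)) * norm_split xk1 vk1 xs
  -- F4 : adjoint switch lamk1 → ls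
  have F4 : ⟪ξ + (ContinuousLinearMap.adjoint A) lamk1, vk1 - xs⟫
      = ⟪ξ + (ContinuousLinearMap.adjoint A) ls, vk1 - xs⟫
        + ⟪A vk1 - b, lamk1 - ls⟫ := by
    have h1 : ⟪ξ + (ContinuousLinearMap.adjoint A) lamk1, vk1 - xs⟫
        = ⟪ξ, vk1 - xs⟫ + ⟪lamk1, A (vk1 - xs)⟫ := by
      rw [inner_add_left, ContinuousLinearMap.adjoint_inner_left]
    have h2 : ⟪ξ + (ContinuousLinearMap.adjoint A) ls, vk1 - xs⟫
        = ⟪ξ, vk1 - xs⟫ + ⟪ls, A (vk1 - xs)⟫ := by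
      rw [inner_add_left, ContinuousLinearMap.adjoint_inner_left]
    have h3 : A (vk1 - xs) = A vk1 - b := by rw [map_sub, hKKT1]
    have h4 : ⟪A vk1 - b, lamk1 - ls⟫ = ⟪lamk1, A vk1 - b⟫ - ⟪ls, A vk1 - b⟫ := by
      rw [real_inner_comm, inner_sub_left]
    rw [h3] at h1 h2
    linarith
  have F4' : αk * ⟪ξ + (ContinuousLinearMap.adjoint A) lamk1, vk1 - xs⟫
      = αk * ⟪ξ + (ContinuousLinearMap.adjoint A) ls, vk1 - xs⟫
        + αk * ⟪A vk1 - b, lamk1 - ls⟫ := by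
    linear_combination αk * F4
  -- F5 : strong convexity at xk
  have SCk := hfβsc xk1 hx1mem xk hxk p hp
  have hqk : ⟪q, xk - xk1⟫ ≤ 0 := hq.2 xk hxk
  have F5 : fβ xk1 + ⟪ls, A xk1 - b⟫
      ≤ fβ xk + ⟪ls, A xk - b⟫
        + αk * ⟪ξ + (ContinuousLinearMap.adjoint A) ls, vk - xk1⟫ := by
    have hc : ⟪ls, A xk - b⟫ - ⟪ls, A xk1 - b⟫
        = ⟪(ContinuousLinearMap.adjoint A) ls, xk - xk1⟫ := by
      rw [ContinuousLinearMap.adjoint_inner_left, map_sub, inner_sub_right,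
        inner_sub_right, inner_sub_right]
      ring
    have hsplit : ⟪ξ + (ContinuousLinearMap.adjoint A) ls, xk - xk1⟫
        = ⟪p, xk - xk1⟫ + ⟪q, xk - xk1⟫
          + ⟪(ContinuousLinearMap.adjoint A) ls, xk - xk1⟫ := by
      rw [← hpq, inner_add_left, inner_add_left]
    have hpr : ⟪ξ + (ContinuousLinearMap.adjoint A) ls, xk - xk1⟫
        = -(αk * ⟪ξ + (ContinuousLinearMap.adjoint A) ls, vk - xk1⟫) := by
      have h : xk - xk1 = -(αk • (vk - xk1)) := by rw [← hprim']; abel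
      rw [h, inner_neg_right, real_inner_smul_right]
    have hnn : 0 ≤ μβ / 2 * ‖xk - xk1‖^2 :=
      mul_nonneg (by linarith) (sq_nonneg _)
    linarith
  -- F6 : strong convexity at xs
  have SCs := hfβsc xk1 hx1mem xs hxs p hp
  have hqs : ⟪q, xs - xk1⟫ ≤ 0 := hq.2 xs hxs
  have F6 : fβ xk1 + ⟪ls, A xk1 - b⟫ + μβ/2 * ‖xk1 - xs‖^2
      ≤ fβ xs + ⟪ξ + (ContinuousLinearMap.adjoint A) ls, xk1 - xs⟫ := by
    have hsplit : ⟪ξ + (ContinuousLinearMap.adjoint A) ls, xk1 - xs⟫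
        = ⟪p, xk1 - xs⟫ + ⟪q, xk1 - xs⟫ + ⟪ls, A (xk1 - xs)⟫ := by
      rw [← hpq, inner_add_left, inner_add_left, ContinuousLinearMap.adjoint_inner_left]
    have h3 : A (xk1 - xs) = A xk1 - b := by rw [map_sub, hKKT1]
    rw [h3] at hsplit
    have hneg1 : ⟪p, xs - xk1⟫ = -⟪p, xk1 - xs⟫ := by
      rw [show xs - xk1 = -(xk1 - xs) by abel, inner_neg_right]
    have hneg2 : ⟪q, xs - xk1⟫ = -⟪q, xk1 - xs⟫ := by
      rw [show xs - xk1 = -(xk1 - xs) by abel, inner_neg_right]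
    have hns : ‖xs - xk1‖ = ‖xk1 - xs‖ := norm_sub_rev _ _
    rw [hneg1, hns] at SCs
    rw [hneg2] at hqs
    linarith
  have F6' : αk * (fβ xk1 + ⟪ls, A xk1 - b⟫ + μβ/2 * ‖xk1 - xs‖^2)
      ≤ αk * (fβ xs + ⟪ξ + (ContinuousLinearMap.adjoint A) ls, xk1 - xs⟫) :=
    mul_le_mul_of_nonneg_left F6 hαk.le
  -- F7 : telescoping of the ξ-inner products
  have F7 : ⟪ξ + (ContinuousLinearMap.adjoint A) ls, vk1 - vk⟫
      + ⟪ξ + (ContinuousLinearMap.adjoint A) ls, xk1 - xs⟫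
      + ⟪ξ + (ContinuousLinearMap.adjoint A) ls, vk - xk1⟫
      = ⟪ξ + (ContinuousLinearMap.adjoint A) ls, vk1 - xs⟫ := by
    rw [← inner_add_right, ← inner_add_right]
    congr 1
    abel
  have F7' : αk * ⟪ξ + (ContinuousLinearMap.adjoint A) ls, vk1 - vk⟫
      + αk * ⟪ξ + (ContinuousLinearMap.adjoint A) ls, xk1 - xs⟫
      + αk * ⟪ξ + (ContinuousLinearMap.adjoint A) ls, vk - xk1⟫
      = αk * ⟪ξ + (ContinuousLinearMap.adjoint A) ls, vk1 - xs⟫ := by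
    linear_combination αk * F7
  -- F10 : expansion of (1+αk) * Ek1
  have e1 : (1 + αk) * γk1 = γk + μβ * αk := by
    rw [hγ1]; field_simp
  have e2 : (1 + αk) * θk1 = θk := by
    rw [hθ1]; field_simp
  have F10 : (1 + αk) * Ek1
      = (1 + αk) * (fβ xk1 + ⟪ls, A xk1 - b⟫ - fβ xs)
        + (γk + μβ * αk)/2 * ‖vk1 - xs‖^2 + θk/2 * ‖lamk1 - ls‖^2 := by
    rw [hEk1, hLβ xk1 ls, hLβ xs lamk1, zs1]
    linear_combination (‖vk1 - xs‖^2/2) * e1 + (‖lamk1 - ls‖^2/2) * e2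
  -- F11 : expansion of Ek
  have F11 : Ek = fβ xk + ⟪ls, A xk - b⟫ - fβ xs
      + γk/2 * ‖vk - xs‖^2 + θk/2 * ‖lamk - ls‖^2 := by
    rw [hEk, hLβ xk ls, hLβ xs lamk, zs0]
    ring
  have hnn2 : 0 ≤ μβ * αk / 2 * ‖xk1 - vk1‖^2 := by
    have h := mul_nonneg (mul_nonneg hμβ0 hαk.le) (sq_nonneg ‖xk1 - vk1‖)
    linarith
  refine ⟨hx1mem, ?_⟩
  linarith [F1, F2, F3, F4', F5, F6', F7', F10, F11, hnn2]
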